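/- For every n ≥ 1, the Lie algebra sol_{A_n} = {X ∈ M_n(ℂ) | Xᵀ A_n + A_n X = 0}, viewed as a Lie subalgebra of the matrix Lie algebra gl_n(ℂ) with bracket [X,Y] = XY − YX, is solvable. -/

import Mathlib

open Matrix

attribute [local instance 100] LieRing.ofAssociativeRing

/-- The `n × n` nilpotent upper-shift matrix `A_n`. -/
def shiftMat (n : ℕ) : Matrix (Fin n) (Fin n) ℂ :=
  Matrix.of fun i j => if (j : ℕ) = (i : ℕ) + 1 then 1 else 0

/-- The Lie algebra `sol_A = {X | Xᵀ A + A X = 0}`, viewed as a Lie subalgebra of the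
matrix Lie algebra `gl_n(ℂ)` with bracket `[X, Y] = XY - YX`. -/
def solAlg (n : ℕ) (A : Matrix (Fin n) (Fin n) ℂ) :
    LieSubalgebra ℂ (Matrix (Fin n) (Fin n) ℂ) where
  carrier := {X | Xᵀ * A + A * X = 0}
  add_mem' := by
    intro a b ha hb
    simp only [Set.mem_setOf_eq] at ha hb ⊢
    have key : (a + b)ᵀ * A + A * (a + b) = (aᵀ * A + A * a) + (bᵀ * A + A * b) := by
      rw [Matrix.transpose_add]; noncomm_ring
    rw [key, ha, hb, add_zero]
  zero_mem' := by simp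
  smul_mem' := by
    intro c x hx
    simp only [Set.mem_setOf_eq] at hx ⊢
    rw [Matrix.transpose_smul, Matrix.smul_mul, Matrix.mul_smul, ← smul_add, hx, smul_zero]
  lie_mem' := by
    intro x y hx hy
    simp only [Set.mem_setOf_eq] at hx hy ⊢
    rw [Ring.lie_def]
    have key : (x * y - y * x)ᵀ * A + A * (x * y - y * x) =
        yᵀ * (xᵀ * A + A * x) + (xᵀ * A + A * x) * y -
          xᵀ * (yᵀ * A + A * y) - (yᵀ * A + A * y) * x := by
      rw [Matrix.transpose_sub, Matrix.transpose_mul, Matrix.transpose_mul]; noncomm_ring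
    rw [key, hx, hy]
    simp

namespace Stmt14Aux

variable {n : ℕ}

/-- zero extension of a matrix to all of ℕ × ℕ -/
def xe (n : ℕ) (X : Matrix (Fin n) (Fin n) ℂ) (r c : ℕ) : ℂ :=
  if h : r < n ∧ c < n then X ⟨r, h.1⟩ ⟨c, h.2⟩ else 0

lemma xe_of_lt (X : Matrix (Fin n) (Fin n) ℂ) {r c : ℕ} (hr : r < n) (hc : c < n) :
    xe n X r c = X ⟨r, hr⟩ ⟨c, hc⟩ := by simp [xe, hr, hc]

lemma xe_apply (X : Matrix (Fin n) (Fin n) ℂ) (i j : Fin n) :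
    xe n X i j = X i j := by
  rw [xe_of_lt X i.isLt j.isLt]

lemma xe_zero_row (X : Matrix (Fin n) (Fin n) ℂ) {r : ℕ} (c : ℕ) (hr : n ≤ r) :
    xe n X r c = 0 := by simp [xe]; omega

lemma xe_zero_col (X : Matrix (Fin n) (Fin n) ℂ) (r : ℕ) {c : ℕ} (hc : n ≤ c) :
    xe n X r c = 0 := by simp [xe]; omega

lemma xe_sub (X Y : Matrix (Fin n) (Fin n) ℂ) (r c : ℕ) :
    xe n (X - Y) r c = xe n X r c - xe n Y r c := by
  unfold xe; split
  · simp [Matrix.sub_apply]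
  · simp

lemma mem_solAlg {A X : Matrix (Fin n) (Fin n) ℂ} :
    X ∈ solAlg n A ↔ Xᵀ * A + A * X = 0 := Iff.rfl

lemma mul_entry (X Y : Matrix (Fin n) (Fin n) ℂ) {r c : ℕ} (hr : r < n) (hc : c < n) :
    xe n (X * Y) r c = ∑ k ∈ Finset.range n, xe n X r k * xe n Y k c := by
  rw [xe_of_lt _ hr hc, Matrix.mul_apply]
  rw [show (∑ k : Fin n, X ⟨r, hr⟩ k * Y k ⟨c, hc⟩)
      = ∑ k : Fin n, (fun m : ℕ => xe n X r m * xe n Y m c) (k : ℕ) from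
    Finset.sum_congr rfl fun k _ => by
      simp [xe_of_lt _ hr k.isLt, xe_of_lt _ k.isLt hc]]
  exact Fin.sum_univ_eq_sum_range (fun m : ℕ => xe n X r m * xe n Y m c) n

/-- the fundamental relation -/
lemma rel1 {X : Matrix (Fin n) (Fin n) ℂ} (hX : X ∈ solAlg n (shiftMat n))
    (r c : ℕ) (hr : r + 1 < n) : xe n X r c + xe n X (c + 1) (r + 1) = 0 := by
  by_cases hc : c < n
  · have h0 : ∀ i j : Fin n, (Xᵀ * shiftMat n + shiftMat n * X) i j = 0 := by
      intro i j; rw [mem_solAlg.mp hX]; rfl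
    have h := h0 ⟨c, hc⟩ ⟨r + 1, hr⟩
    rw [Matrix.add_apply, Matrix.mul_apply, Matrix.mul_apply] at h
    have e1 : (∑ k : Fin n, Xᵀ ⟨c, hc⟩ k * shiftMat n k ⟨r + 1, hr⟩)
        = xe n X r c := by
      rw [Finset.sum_eq_single (⟨r, by omega⟩ : Fin n)]
      · simp [shiftMat, Matrix.transpose_apply, xe_of_lt _ (show r < n by omega) hc]
      · intro k _ hk
        have : ¬ (((⟨r+1, hr⟩ : Fin n) : ℕ) = (k : ℕ) + 1) := by
          simp only [Fin.ne_iff_vne] at hk ⊢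
          simp at hk ⊢
          omega
        simp [shiftMat, this]
        intro h; exact absurd (by simp [h]) this
      · simp
    have e2 : (∑ k : Fin n, shiftMat n ⟨c, hc⟩ k * X k ⟨r + 1, hr⟩)
        = xe n X (c + 1) (r + 1) := by
      by_cases hc1 : c + 1 < n
      · rw [Finset.sum_eq_single (⟨c + 1, hc1⟩ : Fin n)]
        · simp [shiftMat, xe_of_lt _ hc1 hr]
        · intro k _ hk
          have : ¬ ((k : ℕ) = ((⟨c, hc⟩ : Fin n) : ℕ) + 1) := by
            simp only [Fin.ne_iff_vne] at hk
            simp at hk ⊢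
            omega
          simp [shiftMat, this]
        · simp
      · rw [xe_zero_row _ _ (by omega), Finset.sum_eq_zero]
        intro k _
        have : ¬ ((k : ℕ) = ((⟨c, hc⟩ : Fin n) : ℕ) + 1) := by
          have := k.isLt; simp; omega
        simp [shiftMat, this]
    rw [e1, e2] at h
    exact h
  · rw [xe_zero_col _ _ (by omega), xe_zero_row _ _ (by omega), add_zero]

lemma rel2 {X : Matrix (Fin n) (Fin n) ℂ} (hX : X ∈ solAlg n (shiftMat n))
    {r : ℕ} (hr : 0 < r) : xe n X r 0 = 0 := by
  by_cases hrn : r < n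
  · have hn : 0 < n := by omega
    have h0 : ∀ i j : Fin n, (Xᵀ * shiftMat n + shiftMat n * X) i j = 0 := by
      intro i j; rw [mem_solAlg.mp hX]; rfl
    have h := h0 ⟨r - 1, by omega⟩ ⟨0, hn⟩
    rw [Matrix.add_apply, Matrix.mul_apply, Matrix.mul_apply] at h
    have e1 : (∑ k : Fin n, Xᵀ ⟨r - 1, by omega⟩ k * shiftMat n k ⟨0, hn⟩) = 0 := by
      apply Finset.sum_eq_zero; intro k _
      simp [shiftMat]
    have e2 : (∑ k : Fin n, shiftMat n ⟨r - 1, by omega⟩ k * X k ⟨0, hn⟩)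
        = xe n X r 0 := by
      rw [Finset.sum_eq_single (⟨r, hrn⟩ : Fin n)]
      · simp [shiftMat, xe_of_lt _ hrn hn]
        omega
      · intro k _ hk
        have : ¬ ((k : ℕ) = ((⟨r - 1, by omega⟩ : Fin n) : ℕ) + 1) := by
          simp only [Fin.ne_iff_vne] at hk
          simp at hk ⊢
          omega
        simp [shiftMat, this]
      · simp
    rw [e1, e2, zero_add] at h
    exact h
  · exact xe_zero_row _ _ (by omega)


/-- every entry is determined by the first row -/
lemma entry_eq {X : Matrix (Fin n) (Fin n) ℂ} (hX : X ∈ solAlg n (shiftMat n))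
    (r c : ℕ) :
    xe n X r c = (if r % 2 = 0 ∧ r ≤ c ∧ c < n then xe n X 0 (c - r) else 0)
      - (if c % 2 = 1 ∧ c ≤ r ∧ r < n then xe n X 0 (r - c) else 0) := by
  suffices H : ∀ m r c : ℕ, r + c = m →
      xe n X r c = (if r % 2 = 0 ∧ r ≤ c ∧ c < n then xe n X 0 (c - r) else 0)
        - (if c % 2 = 1 ∧ c ≤ r ∧ r < n then xe n X 0 (r - c) else 0) from
    H (r + c) r c rfl
  intro m
  induction m using Nat.strong_induction_on with
  | _ m IH =>
    intro r c hm
    by_cases hr : r < n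
    · by_cases hc : c < n
      · rcases Nat.eq_zero_or_pos r with hr0 | hr1
        · subst hr0
          have h2 : ¬ (c % 2 = 1 ∧ c ≤ 0 ∧ 0 < n) := by
            rintro ⟨h1, h2, -⟩; omega
          rw [if_neg h2, if_pos ⟨by omega, by omega, hc⟩, Nat.sub_zero, sub_zero]
        · rcases Nat.eq_zero_or_pos c with hc0 | hc1
          · subst hc0
            rw [rel2 hX hr1, if_neg (by rintro ⟨-, h, -⟩; omega),
              if_neg (by rintro ⟨h, -, -⟩; omega), sub_zero]
          · -- main case: r, c ≥ 1
            have hrel := rel1 hX (c - 1) (r - 1) (by omega)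
            rw [show c - 1 + 1 = c by omega, show r - 1 + 1 = r by omega] at hrel
            have hIH := IH (r - 1 + (c - 1)) (by omega) (c - 1) (r - 1) (by omega)
            have hmain : xe n X r c = - xe n X (c - 1) (r - 1) := by
              linear_combination hrel
            rw [hmain, hIH]
            have e1 : (if (c-1) % 2 = 0 ∧ c - 1 ≤ r - 1 ∧ r - 1 < n
                  then xe n X 0 (r - 1 - (c - 1)) else 0)
                = (if c % 2 = 1 ∧ c ≤ r ∧ r < n then xe n X 0 (r - c) else 0) := by
              rw [show r - 1 - (c - 1) = r - c by omega]
              exact if_congr (by omega) rfl rfl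
            have e2 : (if (r-1) % 2 = 1 ∧ r - 1 ≤ c - 1 ∧ c - 1 < n
                  then xe n X 0 (c - 1 - (r - 1)) else 0)
                = (if r % 2 = 0 ∧ r ≤ c ∧ c < n then xe n X 0 (c - r) else 0) := by
              rw [show c - 1 - (r - 1) = c - r by omega]
              exact if_congr (by omega) rfl rfl
            rw [e1, e2]; ring
      · rw [xe_zero_col _ _ (by omega), if_neg (by rintro ⟨-, -, h⟩; omega),
          if_neg (by rintro ⟨-, h1, h2⟩; omega), sub_zero]
    · rw [xe_zero_row _ _ (by omega), if_neg (by rintro ⟨-, h1, h2⟩; omega),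
        if_neg (by rintro ⟨-, -, h⟩; omega), sub_zero]

/-- parity constraint on the first row -/
lemma firstRow_parity {X : Matrix (Fin n) (Fin n) ℂ} (hX : X ∈ solAlg n (shiftMat n))
    {d : ℕ} (hd : 1 ≤ d) (hpar : d % 2 ≠ n % 2) : xe n X 0 d = 0 := by
  by_cases hdn : d < n
  · have hr1 : (n - 1 - d) + 1 < n := by omega
    have h1 := rel1 hX (n - 1 - d) (n - 1) hr1
    rw [show n - 1 + 1 = n by omega, xe_zero_row _ _ (le_refl n), add_zero] at h1
    have h2 := entry_eq hX (n - 1 - d) (n - 1)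
    rw [h1, if_pos (⟨by omega, by omega, by omega⟩ :
        (n - 1 - d) % 2 = 0 ∧ n - 1 - d ≤ n - 1 ∧ n - 1 < n),
      if_neg (by rintro ⟨-, h, -⟩; omega), sub_zero,
      show n - 1 - (n - 1 - d) = d by omega] at h2
    exact h2.symm
  · exact xe_zero_col _ _ (by omega)

/-- a member of the algebra whose first row vanishes is zero -/
lemma eq_zero_of_firstRow {X : Matrix (Fin n) (Fin n) ℂ} (hX : X ∈ solAlg n (shiftMat n))
    (h : ∀ c, xe n X 0 c = 0) : X = 0 := by
  ext i j
  have := entry_eq hX i j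
  rw [xe_apply, h, h] at this
  simpa using this

/-- the (0,0) entry of any commutator vanishes -/
lemma comm00 (hn : 0 < n) {X Y : Matrix (Fin n) (Fin n) ℂ}
    (hX : X ∈ solAlg n (shiftMat n)) (hY : Y ∈ solAlg n (shiftMat n)) :
    xe n (X * Y - Y * X) 0 0 = 0 := by
  rw [xe_sub, mul_entry _ _ hn hn, mul_entry _ _ hn hn]
  rw [Finset.sum_eq_single 0, Finset.sum_eq_single 0]
  · ring
  · intro k _ hk
    rw [rel2 hX (by omega), mul_zero]
  · intro h; exact absurd (Finset.mem_range.mpr hn) h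
  · intro k _ hk
    rw [rel2 hY (by omega), mul_zero]
  · intro h; exact absurd (Finset.mem_range.mpr hn) h


/-- two members of the algebra with vanishing (0,0) entry commute -/
lemma key_comm (hn : 1 ≤ n) {X Y : Matrix (Fin n) (Fin n) ℂ}
    (hX : X ∈ solAlg n (shiftMat n)) (hY : Y ∈ solAlg n (shiftMat n))
    (hX0 : xe n X 0 0 = 0) (hY0 : xe n Y 0 0 = 0) : X * Y = Y * X := by
  have hn0 : 0 < n := hn
  have hW : X * Y - Y * X ∈ solAlg n (shiftMat n) := by
    have := (solAlg n (shiftMat n)).lie_mem hX hY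
    rwa [Ring.lie_def] at this
  -- first-row parity vanishing, including position 0
  have hrow : ∀ (U : Matrix (Fin n) (Fin n) ℂ), U ∈ solAlg n (shiftMat n) →
      xe n U 0 0 = 0 → ∀ d, d % 2 ≠ n % 2 → xe n U 0 d = 0 := by
    intro U hU hU0 d hd
    rcases Nat.eq_zero_or_pos d with rfl | hd1
    · exact hU0
    · exact firstRow_parity hU hd1 hd
  suffices hrows : ∀ c, xe n (X * Y - Y * X) 0 c = 0 by
    have := eq_zero_of_firstRow hW hrows
    exact sub_eq_zero.mp this
  intro c
  by_cases hc : c < n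
  · rw [xe_sub, mul_entry _ _ hn0 hc, mul_entry _ _ hn0 hc]
    by_cases hno : n % 2 = 1
    · -- n odd: every term vanishes
      have term0 : ∀ (U V : Matrix (Fin n) (Fin n) ℂ),
          U ∈ solAlg n (shiftMat n) → V ∈ solAlg n (shiftMat n) →
          xe n U 0 0 = 0 → xe n V 0 0 = 0 →
          ∀ k ∈ Finset.range n, xe n U 0 k * xe n V k c = 0 := by
        intro U V hU hV hU0 hV0 k _
        by_cases hk2 : k % 2 = 0
        · rw [hrow U hU hU0 k (by omega), zero_mul]
        · have hVk : xe n V k c = 0 := by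
            rw [entry_eq hV k c, if_neg (by rintro ⟨h, -, -⟩; omega)]
            by_cases h2 : c % 2 = 1 ∧ c ≤ k ∧ k < n
            · rw [if_pos h2, hrow V hV hV0 (k - c) (by omega)]; ring
            · rw [if_neg h2]; ring
          rw [hVk, mul_zero]
      rw [Finset.sum_eq_zero (term0 X Y hX hY hX0 hY0),
        Finset.sum_eq_zero (term0 Y X hY hX hY0 hX0), sub_zero]
    · by_cases hc2 : c % 2 = 1
      · -- n even, c odd : every term vanishes
        have term0 : ∀ (U V : Matrix (Fin n) (Fin n) ℂ),
            U ∈ solAlg n (shiftMat n) → V ∈ solAlg n (shiftMat n) →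
            xe n U 0 0 = 0 → xe n V 0 0 = 0 →
            ∀ k ∈ Finset.range n, xe n U 0 k * xe n V k c = 0 := by
          intro U V hU hV hU0 hV0 k _
          by_cases hk2 : k % 2 = 0
          · have hVk : xe n V k c = 0 := by
              rw [entry_eq hV k c]
              have e1 : (if k % 2 = 0 ∧ k ≤ c ∧ c < n then xe n V 0 (c - k) else 0) = 0 := by
                split_ifs with h
                · exact hrow V hV hV0 (c - k) (by omega)
                · rfl
              have e2 : (if c % 2 = 1 ∧ c ≤ k ∧ k < n then xe n V 0 (k - c) else 0) = 0 := by
                split_ifs with h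
                · exact hrow V hV hV0 (k - c) (by omega)
                · rfl
              rw [e1, e2, sub_zero]
            rw [hVk, mul_zero]
          · rw [hrow U hU hU0 k (by omega), zero_mul]
        rw [Finset.sum_eq_zero (term0 X Y hX hY hX0 hY0),
          Finset.sum_eq_zero (term0 Y X hY hX hY0 hX0), sub_zero]
      · -- n even, c even : convolution symmetry
        have conv : ∀ (U V : Matrix (Fin n) (Fin n) ℂ),
            U ∈ solAlg n (shiftMat n) → V ∈ solAlg n (shiftMat n) →
            xe n U 0 0 = 0 → xe n V 0 0 = 0 →
            (∑ k ∈ Finset.range n, xe n U 0 k * xe n V k c)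
              = ∑ k ∈ Finset.range (c + 1), xe n U 0 k * xe n V 0 (c - k) := by
          intro U V hU hV hU0 hV0
          rw [← Finset.sum_subset (Finset.range_subset_range.mpr (by omega : c + 1 ≤ n))]
          · apply Finset.sum_congr rfl
            intro k hk
            have hkc : k ≤ c := by have := Finset.mem_range.mp hk; omega
            by_cases hk2 : k % 2 = 0
            · rw [entry_eq hV k c, if_pos ⟨hk2, hkc, hc⟩,
                if_neg (by rintro ⟨h, -, -⟩; omega), sub_zero]
            · rw [hrow U hU hU0 k (by omega), zero_mul, zero_mul]
          · intro k hk hk2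
            have hkc : c < k := by
              have := Finset.mem_range.mp hk
              simp only [Finset.mem_range] at hk2
              omega
            have hVk : xe n V k c = 0 := by
              rw [entry_eq hV k c, if_neg (by rintro ⟨-, h, -⟩; omega),
                if_neg (by rintro ⟨h, -, -⟩; omega), sub_zero]
            rw [hVk, mul_zero]
        rw [conv X Y hX hY hX0 hY0, conv Y X hY hX hY0 hX0]
        have hreflect : (∑ k ∈ Finset.range (c + 1), xe n X 0 k * xe n Y 0 (c - k))
            = ∑ k ∈ Finset.range (c + 1),
                (fun j => xe n Y 0 j * xe n X 0 (c - j)) (c + 1 - 1 - k) := by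
          apply Finset.sum_congr rfl
          intro k hk
          have hkc : k ≤ c := by have := Finset.mem_range.mp hk; omega
          simp only
          rw [show c + 1 - 1 - k = c - k by omega, show c - (c - k) = k by omega]
          ring
        rw [hreflect, Finset.sum_range_reflect (fun j => xe n Y 0 j * xe n X 0 (c - j)) (c + 1)]
        simp
  · rw [xe_zero_col _ _ (by omega)]


lemma xe_add (X Y : Matrix (Fin n) (Fin n) ℂ) (r c : ℕ) :
    xe n (X + Y) r c = xe n X r c + xe n Y r c := by
  unfold xe; split
  · simp [Matrix.add_apply]
  · simp

lemma xe_smul (a : ℂ) (X : Matrix (Fin n) (Fin n) ℂ) (r c : ℕ) :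
    xe n (a • X) r c = a * xe n X r c := by
  unfold xe; split
  · simp [Matrix.smul_apply]
  · simp

end Stmt14Aux

open Stmt14Aux in
/-- For every `n ≥ 1`, the Lie algebra
`sol_{A_n} = {X | Xᵀ A_n + A_n X = 0}` is solvable. -/
theorem stmt_14 (n : ℕ) (hn : 1 ≤ n) :
    LieAlgebra.IsSolvable ↥(solAlg n (shiftMat n)) := by
  have hn0 : 0 < n := hn
  set L := ↥(solAlg n (shiftMat n)) with hL
  let φ : L →ₗ[ℂ] ℂ :=
  { toFun := fun z => xe n (z : Matrix (Fin n) (Fin n) ℂ) 0 0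
    map_add' := by
      intro a b
      show xe n ((a + b : L) : Matrix (Fin n) (Fin n) ℂ) 0 0
          = xe n (a : Matrix (Fin n) (Fin n) ℂ) 0 0 + xe n (b : Matrix (Fin n) (Fin n) ℂ) 0 0
      rw [show ((a + b : L) : Matrix (Fin n) (Fin n) ℂ)
          = (a : Matrix (Fin n) (Fin n) ℂ) + b from rfl, xe_add]
    map_smul' := by
      intro a b
      show xe n ((a • b : L) : Matrix (Fin n) (Fin n) ℂ) 0 0
          = (RingHom.id ℂ) a • xe n (b : Matrix (Fin n) (Fin n) ℂ) 0 0
      rw [show ((a • b : L) : Matrix (Fin n) (Fin n) ℂ)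
          = a • (b : Matrix (Fin n) (Fin n) ℂ) from rfl, xe_smul]
      rfl }
  let I : LieIdeal ℂ L :=
  { toSubmodule := LinearMap.ker φ
    lie_mem := by
      intro x m _
      show xe n ((⁅x, m⁆ : L) : Matrix (Fin n) (Fin n) ℂ) 0 0 = 0
      have hco : ((⁅x, m⁆ : L) : Matrix (Fin n) (Fin n) ℂ)
          = (x : Matrix (Fin n) (Fin n) ℂ) * m - m * x := by
        rw [LieSubalgebra.coe_bracket, Ring.lie_def]
      rw [hco]
      exact comm00 hn0 x.2 m.2 }
  have memI : ∀ z : L, z ∈ I ↔ xe n (z : Matrix (Fin n) (Fin n) ℂ) 0 0 = 0 := by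
    intro z; rfl
  have hD1 : LieAlgebra.derivedSeries ℂ L 1 ≤ I := by
    rw [LieAlgebra.derivedSeries_def, LieAlgebra.derivedSeriesOfIdeal_succ,
      LieAlgebra.derivedSeriesOfIdeal_zero, LieSubmodule.lie_le_iff]
    intro x _ m _
    rw [memI]
    have hco : ((⁅x, m⁆ : L) : Matrix (Fin n) (Fin n) ℂ)
        = (x : Matrix (Fin n) (Fin n) ℂ) * m - m * x := by
      rw [LieSubalgebra.coe_bracket, Ring.lie_def]
    rw [hco]
    exact comm00 hn0 x.2 m.2
  have hII : ⁅I, I⁆ = ⊥ := by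
    rw [LieSubmodule.lie_eq_bot_iff]
    intro x hx m hm
    rw [memI] at hx hm
    have h := key_comm hn x.2 m.2 hx hm
    have hco : ((⁅x, m⁆ : L) : Matrix (Fin n) (Fin n) ℂ)
        = (x : Matrix (Fin n) (Fin n) ℂ) * m - m * x := by
      rw [LieSubalgebra.coe_bracket, Ring.lie_def]
    have : ((⁅x, m⁆ : L) : Matrix (Fin n) (Fin n) ℂ) = 0 := by
      rw [hco, h, sub_self]
    exact Subtype.ext this
  refine (LieAlgebra.isSolvable_iff ℂ L).mpr ⟨2, ?_⟩
  have h2 : LieAlgebra.derivedSeries ℂ L 2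
      = ⁅LieAlgebra.derivedSeries ℂ L 1, LieAlgebra.derivedSeries ℂ L 1⁆ := by
    rw [LieAlgebra.derivedSeries_def, LieAlgebra.derivedSeriesOfIdeal_succ,
      ← LieAlgebra.derivedSeries_def]
  rw [h2]
  exact le_bot_iff.mp ((LieSubmodule.mono_lie hD1 hD1).trans hII.le)
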